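/- Let Δ ≥ 2 be a real, let δ₁, δ₂ be positive reals with δ₁ + δ₂ < 1, let ν be a real satisfying 1/(1 + exp(Δ^δ₁)) ≤ ν ≤ 1/(1 + exp(1/(Δ^δ₂ - 1))), set μ := 1 - ν, let ε₂ > 0 be a real, and set ε₁ := Δ^(δ₁+δ₂-1). Then 0 < ε₁ < 1, and for every real c, if c ≥ (2μ/ln(μ/ν)) · (1+ε₂) · (1 + Δ^(δ₁-1)) / (1 - Δ^(δ₁+δ₂-1)), then c ≥ max{ (2μ/ln(μ/ν) + 1/Δ) · (1+ε₂)/(1-ε₁), (ln(μ/ν)+1)·μ / (ε₁·Δ·ln(μ/ν)) }. -/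
import Mathlib

open Real

theorem stmt_9 (Δ δ₁ δ₂ ν μ ε₂ ε₁ : ℝ)
    (hΔ : 2 ≤ Δ) (hδ₁ : 0 < δ₁) (hδ₂ : 0 < δ₂) (hδ : δ₁ + δ₂ < 1)
    (hν₁ : 1 / (1 + Real.exp (Δ ^ δ₁)) ≤ ν)
    (hν₂ : ν ≤ 1 / (1 + Real.exp (1 / (Δ ^ δ₂ - 1))))
    (hμ : μ = 1 - ν) (hε₂ : 0 < ε₂)
    (hε₁ : ε₁ = Δ ^ (δ₁ + δ₂ - 1)) :
    0 < ε₁ ∧ ε₁ < 1 ∧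
    ∀ c : ℝ,
      c ≥ (2 * μ / Real.log (μ / ν)) * (1 + ε₂) * (1 + Δ ^ (δ₁ - 1)) / (1 - Δ ^ (δ₁ + δ₂ - 1)) →
      c ≥ max ((2 * μ / Real.log (μ / ν) + 1 / Δ) * ((1 + ε₂) / (1 - ε₁)))
              ((Real.log (μ / ν) + 1) * μ / (ε₁ * Δ * Real.log (μ / ν))) := by
  have hΔ0 : (0:ℝ) < Δ := by linarith
  have hΔ1 : (1:ℝ) < Δ := by linarith
  set L := Real.log (μ / ν) with hLdef
  set a := Δ ^ δ₁ with hadef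
  set d := Δ ^ (δ₁ - 1) with hddef
  have ha_pos : 0 < a := Real.rpow_pos_of_pos hΔ0 _
  have hd_pos : 0 < d := Real.rpow_pos_of_pos hΔ0 _
  have he1_pos : 0 < ε₁ := hε₁ ▸ Real.rpow_pos_of_pos hΔ0 _
  have he1_lt : ε₁ < 1 := by
    rw [hε₁]; exact Real.rpow_lt_one_of_one_lt_of_neg hΔ1 (by linarith)
  -- ν bounds
  have hν_pos : 0 < ν := lt_of_lt_of_le (by positivity) hν₁
  have hδ₂pow : 1 < Δ ^ δ₂ := Real.one_lt_rpow_iff_of_pos hΔ0 |>.mpr (Or.inl ⟨hΔ1, hδ₂⟩)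
  have hx_pos : 0 < 1 / (Δ ^ δ₂ - 1) := div_pos one_pos (by linarith)
  have hexp1 : 1 < Real.exp (1 / (Δ ^ δ₂ - 1)) := by
    have := Real.add_one_le_exp (1 / (Δ ^ δ₂ - 1)); linarith
  have hν_half : ν < 1 / 2 := lt_of_le_of_lt hν₂ (by
    rw [div_lt_div_iff₀ (by linarith) (by norm_num)]; linarith)
  have hμ_half : 1 ≤ 2 * μ := by rw [hμ]; linarith
  have hμ_pos : 0 < μ := by rw [hμ]; linarith
  -- log bounds
  have hratio : 1 < μ / ν := by
    rw [hμ, lt_div_iff₀ hν_pos]; linarith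
  have hL : 0 < L := Real.log_pos hratio
  have h1 : 1 ≤ ν * (1 + Real.exp a) := by
    have := (div_le_iff₀ (by positivity)).mp hν₁
    linarith
  have hratio_le : μ / ν ≤ Real.exp a := by
    rw [hμ, div_le_iff₀ hν_pos]; nlinarith [Real.exp_pos a]
  have hLa : L ≤ a := by
    have := Real.log_le_log (by positivity) hratio_le
    rwa [Real.log_exp] at this
  -- rpow algebra
  have hdΔ : d * Δ = a := by
    rw [hddef, hadef]
    have h := (Real.rpow_add hΔ0 (δ₁ - 1) 1).symm
    rw [Real.rpow_one] at h
    rw [h]; ring_nf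
  have heΔ : ε₁ * Δ = Δ ^ (δ₁ + δ₂) := by
    rw [hε₁]
    have h := (Real.rpow_add hΔ0 (δ₁ + δ₂ - 1) 1).symm
    rw [Real.rpow_one] at h
    rw [h]; ring_nf
  have haP : a ≤ Δ ^ (δ₁ + δ₂) := Real.rpow_le_rpow_of_exponent_le hΔ1.le (by linarith)
  have h1P : 1 ≤ Δ ^ (δ₁ + δ₂) := by
    rw [← Real.rpow_zero Δ]
    exact Real.rpow_le_rpow_of_exponent_le hΔ1.le (by positivity)
  refine ⟨he1_pos, he1_lt, ?_⟩
  intro c hc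
  rw [← hε₁] at hc
  rw [ge_iff_le, max_le_iff]
  have hu : 0 < 1 - ε₁ := by linarith
  constructor
  · refine le_trans ?_ hc
    have key : 1 / Δ ≤ 2 * μ * d / L := by
      rw [div_le_div_iff₀ hΔ0 hL]
      have h2 : 2 * μ * d * Δ = 2 * μ * a := by rw [← hdΔ]; ring
      have h3 := mul_le_mul_of_nonneg_right hμ_half ha_pos.le
      linarith
    have step : (2 * μ / L + 1 / Δ) * (1 + ε₂) ≤ 2 * μ / L * (1 + ε₂) * (1 + d) := by
      have h2 : 2 * μ / L + 1 / Δ ≤ 2 * μ / L * (1 + d) := by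
        have : 2 * μ / L + 2 * μ * d / L = 2 * μ / L * (1 + d) := by ring
        linarith [key]
      have h3 := mul_le_mul_of_nonneg_right h2 (by linarith : (0:ℝ) ≤ 1 + ε₂)
      linarith [h3, (by ring : (2 * μ / L * (1 + d)) * (1 + ε₂) = 2 * μ / L * (1 + ε₂) * (1 + d))]
    calc (2 * μ / L + 1 / Δ) * ((1 + ε₂) / (1 - ε₁))
        = (2 * μ / L + 1 / Δ) * (1 + ε₂) / (1 - ε₁) := by ring
      _ ≤ 2 * μ / L * (1 + ε₂) * (1 + d) / (1 - ε₁) := by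
          exact div_le_div_of_nonneg_right step hu.le |>.trans_eq rfl
  · refine le_trans ?_ hc
    have hB : (L + 1) * μ / (ε₁ * Δ * L) ≤ 2 * μ / L := by
      rw [div_le_div_iff₀ (by positivity) hL]
      have hL2P : L + 1 ≤ 2 * (ε₁ * Δ) := by rw [heΔ]; linarith
      have h3 := mul_le_mul_of_nonneg_right
        (mul_le_mul_of_nonneg_right hL2P hμ_pos.le) hL.le
      linarith [h3, (by ring : 2 * (ε₁ * Δ) * μ * L = 2 * μ * (ε₁ * Δ * L))]
    refine hB.trans ?_
    rw [le_div_iff₀ hu]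
    have hx : 0 < 2 * μ / L := by positivity
    nlinarith [mul_pos hx hε₂, mul_pos hx hd_pos, mul_pos (mul_pos hx hε₂) hd_pos,
      mul_pos hx he1_pos]
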